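/- Let F be a perfect field and let A be a finite-dimensional commutative associative unital F-algebra. If A has a finite-dimensional faithful uniserial module of composition length ℓ, then A = F[u] for some u ∈ A whose minimal polynomial over F is p^ℓ for some monic irreducible polynomial p ∈ F[X]. -/

import Mathlib

open Polynomial IsLocalRing

theorem eval_two_term {A : Type*} [CommRing A] (f : A[X]) (t : A) :
    f.eval t = f.coeff 0 + t * (f.coeff 1 + t * ((f.divX.divX).eval t)) := by
  conv_lhs => rw [← f.X_mul_divX_add]
  conv_lhs => rw [← f.divX.X_mul_divX_add]
  simp [coeff_divX]; ring

theorem my_hensel {A : Type*} [CommRing A] [IsLocalRing A] (ℓ : ℕ)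
    (hnil : maximalIdeal A ^ ℓ = ⊥) (f : A[X]) (a₀ : A)
    (h0 : f.eval a₀ ∈ maximalIdeal A) (hd : IsUnit (f.derivative.eval a₀)) :
    ∃ a : A, f.eval a = 0 ∧ a - a₀ ∈ maximalIdeal A := by
  set m := maximalIdeal A with hm
  have key : ∀ k : ℕ, 1 ≤ k → ∃ a : A, f.eval a ∈ m ^ k ∧ a - a₀ ∈ m := by
    intro k hk
    induction k with
    | zero => omega
    | succ k ih =>
      rcases Nat.eq_or_lt_of_le hk with h1 | h1
      · exact ⟨a₀, by simpa [← h1] using h0, by simp⟩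
      have hk1 : 1 ≤ k := by omega
      obtain ⟨a, ha1, ha2⟩ := ih hk1
      -- derivative at a is a unit
      have hdiff : f.derivative.eval a - f.derivative.eval a₀ ∈ m :=
        Ideal.mem_of_dvd _ (sub_dvd_eval_sub a a₀ f.derivative) ha2
      have hda : IsUnit (f.derivative.eval a) := by
        by_contra hnu
        have : f.derivative.eval a ∈ m := mem_maximalIdeal _ |>.mpr hnu
        have : f.derivative.eval a₀ ∈ m := by
          have := m.sub_mem this hdiff
          simpa using this
        exact (mem_maximalIdeal _ |>.mp this) hd
      set d := f.derivative.eval a with hdd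
      set e := f.eval a * ↑hda.unit⁻¹ with he
      refine ⟨a - e, ?_, ?_⟩
      · have heval : f.eval (a - e) = f.eval a - e * d +
            e * e * ((taylor a f).divX.divX.eval (-e)) := by
          have h1 : f.eval (-e + a) = (taylor a f).eval (-e) := (taylor_eval a f (-e)).symm
          rw [show a - e = -e + a by ring, h1, eval_two_term]
          rw [taylor_coeff_zero, taylor_coeff_one]
          ring
        have hed : e * d = f.eval a := by
          rw [he, mul_assoc, IsUnit.val_inv_mul, mul_one]
        rw [heval, hed, sub_self, zero_add]
        have hem : e ∈ m ^ k := Ideal.mul_mem_right _ _ ha1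
        have : e * e ∈ m ^ (k + k) := by
          rw [pow_add]; exact Ideal.mul_mem_mul hem hem
        have : e * e * ((taylor a f).divX.divX.eval (-e)) ∈ m ^ (k + k) := Ideal.mul_mem_right _ _ this
        exact Ideal.pow_le_pow_right (by omega) this
      · have hem : e ∈ m := (Ideal.pow_le_self (by omega)) (Ideal.mul_mem_right _ _ ha1)
        have := m.sub_mem ha2 hem
        have h : a - e - a₀ = a - a₀ - e := by ring
        rw [h]; exact this
  obtain ⟨a, ha1, ha2⟩ := key (max ℓ 1) (le_max_right _ _)
  refine ⟨a, ?_, ha2⟩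
  have : f.eval a ∈ (⊥ : Ideal A) := by
    rw [← hnil]; exact Ideal.pow_le_pow_right (le_max_left _ _) ha1
  simpa using this




/-- **Theorem (abel), (c) ⟹ (a).** Let `F` be a perfect field and `A` a
finite-dimensional commutative associative unital `F`-algebra.  If `A` has a
finite-dimensional faithful uniserial module of composition length `ℓ` (uniserial:
nonzero with submodules totally ordered; length-`ℓ` composition series encoded as a
maximal chain `⊥ = c 0 ⋖ c 1 ⋖ ⋯ ⋖ c ℓ = ⊤`), then `A = F[u]` for some `u ∈ A` whose
minimal polynomial over `F` is `p^ℓ` with `p ∈ F[X]` monic irreducible. -/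
theorem stmt9 (F : Type*) [Field F] [PerfectField F]
    (A : Type*) [CommRing A] [Algebra F A] [FiniteDimensional F A]
    (V : Type*) [AddCommGroup V] [Module A V] [Module F V] [IsScalarTower F A V]
    [FiniteDimensional F V] [FaithfulSMul A V]
    (huni : Nontrivial V ∧ ∀ W₁ W₂ : Submodule A V, W₁ ≤ W₂ ∨ W₂ ≤ W₁)
    (ℓ : ℕ)
    (hlen : ∃ c : Fin (ℓ + 1) → Submodule A V, c 0 = ⊥ ∧ c (Fin.last ℓ) = ⊤ ∧
      ∀ i : Fin ℓ, c i.castSucc ⋖ c i.succ) :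
    ∃ u : A, Algebra.adjoin F {u} = ⊤ ∧
      ∃ p : Polynomial F, p.Monic ∧ Irreducible p ∧ minpoly F u = p ^ ℓ := by
  obtain ⟨hV, hcomp⟩ := huni
  obtain ⟨c, hc0, hcl, hcov⟩ := hlen
  haveI : Nontrivial A := by
    rcases subsingleton_or_nontrivial A with h | h
    · exfalso
      obtain ⟨v, w, hvw⟩ := hV
      have hz : ∀ x : V, x = 0 := fun x => by
        calc x = (1 : A) • x := (one_smul A x).symm
        _ = (0 : A) • x := by rw [Subsingleton.elim (1 : A) 0]
        _ = 0 := zero_smul A x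
      exact hvw (by rw [hz v, hz w])
    · exact h
  haveI hNV : IsNoetherian A V := isNoetherian_of_tower F inferInstance
  haveI hNA : IsNoetherian A A := isNoetherian_of_tower F inferInstance
  -- cyclic generator
  obtain ⟨M, hM, hMmax⟩ := set_has_maximal_iff_noetherian.mpr hNV
    {W : Submodule A V | W ≠ ⊤} ⟨⊥, bot_ne_top⟩
  have hMne : M ≠ ⊤ := hM
  obtain ⟨v, hv⟩ : ∃ v, v ∉ M := by
    by_contra h
    push_neg at h
    exact hMne (eq_top_iff.mpr fun x _ => h x)
  have hspan : Submodule.span A {v} = ⊤ := by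
    by_contra hs
    rcases hcomp (Submodule.span A {v}) M with h | h
    · exact hv (h (Submodule.mem_span_singleton_self v))
    · exact hMmax _ hs (lt_of_le_of_ne h (fun he => hv (he ▸ Submodule.mem_span_singleton_self v)))
  have hbij : Function.Bijective (LinearMap.toSpanSingleton A V v) := by
    constructor
    · rw [← LinearMap.ker_eq_bot, eq_bot_iff]
      intro a ha
      simp only [LinearMap.mem_ker, LinearMap.toSpanSingleton_apply] at ha
      have : a = (0 : A) := by
        apply FaithfulSMul.eq_of_smul_eq_smul (α := V)
        intro w
        have hw : w ∈ Submodule.span A {v} := hspan ▸ Submodule.mem_top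
        obtain ⟨b, rfl⟩ := Submodule.mem_span_singleton.mp hw
        have hcm : a • (b • v) = b • (a • v) := by rw [smul_smul, smul_smul, mul_comm]
        rw [hcm, ha, smul_zero, zero_smul]
      simp [this]
    · rw [← LinearMap.range_eq_top, ← LinearMap.span_singleton_eq_range, hspan]
  set e : A ≃ₗ[A] V := LinearEquiv.ofBijective _ hbij with he
  set o : Submodule A A ≃o Submodule A V := Submodule.orderIsoMapComap e with ho
  have T : ∀ I J : Ideal A, I ≤ J ∨ J ≤ I := fun I J => by
    rcases hcomp (o I) (o J) with h | h
    · exact Or.inl (o.le_iff_le.mp h)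
    · exact Or.inr (o.le_iff_le.mp h)
  haveI : IsLocalRing A := by
    apply IsLocalRing.of_nonunits_add
    intro a b ha hb
    have ha' : Ideal.span {a} ≠ ⊤ := fun h => ha (Ideal.span_singleton_eq_top.mp h)
    have hb' : Ideal.span {b} ≠ ⊤ := fun h => hb (Ideal.span_singleton_eq_top.mp h)
    rcases T (Ideal.span {a}) (Ideal.span {b}) with h | h
    · intro hu
      exact hb' (Ideal.eq_top_of_isUnit_mem _
        (Ideal.add_mem _ (h (Ideal.mem_span_singleton_self a)) (Ideal.mem_span_singleton_self b)) hu)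
    · intro hu
      exact ha' (Ideal.eq_top_of_isUnit_mem _
        (Ideal.add_mem _ (Ideal.mem_span_singleton_self a) (h (Ideal.mem_span_singleton_self b))) hu)
  set m := maximalIdeal A with hmdef
  -- m is principal
  classical
  have hprinc : ∀ s : Finset A, ∃ x : A, Ideal.span (s : Set A) = Ideal.span {x} := by
    intro s
    induction s using Finset.induction_on with
    | empty => exact ⟨0, by rw [Finset.coe_empty, Ideal.span_empty, Ideal.span_singleton_eq_bot.mpr rfl]⟩
    | @insert a s' ha' ih =>
      obtain ⟨y, hy⟩ := ih
      rw [Finset.coe_insert, Ideal.span_insert, hy]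
      rcases T (Ideal.span {a}) (Ideal.span {y}) with h | h
      · exact ⟨y, sup_eq_right.mpr h⟩
      · exact ⟨a, sup_eq_left.mpr h⟩
  obtain ⟨sm, hsm⟩ := IsNoetherian.noetherian (R := A) m
  obtain ⟨π, hπ⟩ := hprinc sm
  have hmπ : m = Ideal.span {π} := by rw [← hsm]; exact hπ
  -- covering step
  have covstep : ∀ (x : A) (W : Ideal A), W ⋖ Ideal.span {x} → W = m * Ideal.span {x} := by
    intro x W hcov'
    have hxne : Ideal.span {x} ≠ ⊥ := fun h => by
      rw [h] at hcov'; exact not_lt_bot hcov'.1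
    have hlt : m * Ideal.span {x} < Ideal.span {x} := by
      refine lt_of_le_of_ne Ideal.mul_le_right (fun hEq => hxne ?_)
      apply Submodule.eq_bot_of_le_smul_of_le_jacobson_bot m _ (Submodule.fg_span_singleton x)
      · rw [Ideal.smul_eq_mul]; exact hEq.ge
      · rw [IsLocalRing.jacobson_eq_maximalIdeal ⊥ bot_ne_top]
    have hWle : W ≤ m * Ideal.span {x} := by
      intro w hw
      obtain ⟨a, ha⟩ := Ideal.mem_span_singleton'.mp (hcov'.1.le hw)
      by_cases hu : IsUnit a
      · exfalso
        have hxW : x ∈ W := by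
          have : (↑hu.unit⁻¹ : A) * w ∈ W := Ideal.mul_mem_left _ _ hw
          rwa [← ha, ← mul_assoc, IsUnit.val_inv_mul, one_mul] at this
        exact hcov'.1.ne (le_antisymm hcov'.1.le
          ((Ideal.span_singleton_le_iff_mem _).mpr hxW))
      · have ham : a ∈ m := (mem_maximalIdeal a).mpr hu
        rw [← ha]
        exact Ideal.mul_mem_mul ham (Ideal.mem_span_singleton_self x)
    rcases eq_or_lt_of_le hWle with h | h
    · exact h
    · exact absurd hlt (hcov'.2 h)
  -- transported chain
  set d : Fin (ℓ + 1) → Ideal A := fun i => o.symm (c i) with hd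
  have hd0 : d 0 = ⊥ := by rw [hd]; simp [hc0]
  have hdl : d (Fin.last ℓ) = ⊤ := by rw [hd]; simp [hcl]
  have hdcov : ∀ i : Fin ℓ, d i.castSucc ⋖ d i.succ := fun i =>
    (apply_covBy_apply_iff o.symm).mpr (hcov i)
  have hl1 : 1 ≤ ℓ := by
    rcases Nat.eq_zero_or_pos ℓ with h | h
    · exfalso
      have hct : c 0 = c (Fin.last ℓ) := by subst h; rfl
      rw [hc0, hcl] at hct
      exact absurd hct bot_ne_top
    · exact h
  have hchain : ∀ k, k ≤ ℓ → d ⟨ℓ - k, by omega⟩ = m ^ k := by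
    intro k
    induction k with
    | zero =>
      intro _
      have h0 : (⟨ℓ - 0, by omega⟩ : Fin (ℓ + 1)) = Fin.last ℓ := Fin.ext (by simp)
      rw [h0, hdl, pow_zero, Ideal.one_eq_top]
    | succ k ih =>
      intro hk
      have IH := ih (by omega)
      have hcovk := hdcov ⟨ℓ - k - 1, by omega⟩
      have h1 : (Fin.castSucc ⟨ℓ - k - 1, by omega⟩ : Fin (ℓ + 1)) = ⟨ℓ - (k + 1), by omega⟩ :=
        Fin.ext (by simp; omega)
      have h2 : (Fin.succ ⟨ℓ - k - 1, by omega⟩ : Fin (ℓ + 1)) = ⟨ℓ - k, by omega⟩ :=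
        Fin.ext (by simp; omega)
      rw [h1, h2] at hcovk
      rw [IH, hmπ, Ideal.span_singleton_pow] at hcovk
      have hstep := covstep _ _ hcovk
      rw [hstep, ← Ideal.span_singleton_pow, ← hmπ]
      exact (pow_succ' m k).symm
  have hbot : m ^ ℓ = ⊥ := by
    have h := hchain ℓ le_rfl
    have h0 : (⟨ℓ - ℓ, by omega⟩ : Fin (ℓ + 1)) = 0 := Fin.ext (by simp)
    rw [h0, hd0] at h
    exact h.symm
  have hne : m ^ (ℓ - 1) ≠ ⊥ := by
    have h := hchain (ℓ - 1) (by omega)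
    have h1 : (⟨ℓ - (ℓ - 1), by omega⟩ : Fin (ℓ + 1)) = ⟨1, by omega⟩ := Fin.ext (by simp; omega)
    rw [h1] at h
    have hc01 := hdcov ⟨0, hl1⟩
    have h2 : (Fin.castSucc ⟨0, hl1⟩ : Fin (ℓ + 1)) = 0 := Fin.ext (by simp)
    have h3 : (Fin.succ ⟨0, hl1⟩ : Fin (ℓ + 1)) = ⟨1, by omega⟩ := Fin.ext (by simp)
    rw [h2, h3, hd0] at hc01
    rw [← h]
    exact hc01.lt.ne'
  -- residue field
  letI : Field (A ⧸ m) := Ideal.Quotient.field m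
  haveI : Module.Finite F (A ⧸ m) :=
    Module.Finite.of_surjective (Ideal.Quotient.mkₐ F m).toLinearMap
      (Ideal.Quotient.mkₐ_surjective F m)
  haveI : Algebra.IsAlgebraic F (A ⧸ m) := Algebra.IsAlgebraic.of_finite F (A ⧸ m)
  obtain ⟨abar, habar⟩ := Field.exists_primitive_element F (A ⧸ m)
  set p := minpoly F abar with hpdef
  have hpint : IsIntegral F abar := IsIntegral.of_finite F abar
  have hmonic : p.Monic := minpoly.monic hpint
  have hirr : Irreducible p := minpoly.irreducible hpint
  obtain ⟨a₀, ha₀⟩ := Ideal.Quotient.mk_surjective (I := m) abar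
  set f := p.map (algebraMap F A) with hfdef
  have hfeval : ∀ x : A, f.eval x = aeval x p := fun x => by
    rw [aeval_def, eval_map]
  have hres : ∀ (q : F[X]) (x : A),
      Ideal.Quotient.mk m (aeval x q) = aeval (Ideal.Quotient.mk m x) q :=
    fun q x => by
      have := aeval_algHom_apply (Ideal.Quotient.mkₐ F m) x q
      simpa using this.symm
  have h0 : f.eval a₀ ∈ m := by
    rw [hfeval, ← Ideal.Quotient.eq_zero_iff_mem, hres, ha₀, minpoly.aeval]
  have hder : ∀ x : A, f.derivative.eval x = aeval x (derivative p) := fun x => by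
    rw [hfdef, derivative_map, aeval_def, eval_map]
  have hsep : p.Separable := PerfectField.separable_of_irreducible hirr
  have hd'ne : aeval abar (derivative p) ≠ 0 := by
    intro h
    have hpne : derivative p ≠ 0 := by
      intro h0
      have hsep' := hsep
      rw [Polynomial.separable_def, h0] at hsep'
      exact hirr.not_isUnit (isCoprime_zero_right.mp hsep')
    have hdvd := minpoly.dvd F abar h
    have h1 := Polynomial.degree_le_of_dvd hdvd hpne
    have h2 := Polynomial.degree_derivative_lt hmonic.ne_zero
    exact absurd (lt_of_le_of_lt h1 h2) (lt_irrefl _)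
  have hd0unit : IsUnit (f.derivative.eval a₀) := by
    by_contra h
    have hm : f.derivative.eval a₀ ∈ m := (mem_maximalIdeal _).mpr h
    apply hd'ne
    rw [← ha₀, ← hres]
    rw [← hder]
    exact Ideal.Quotient.eq_zero_iff_mem.mpr hm
  obtain ⟨a, haroot, hamem⟩ := my_hensel ℓ hbot f a₀ h0 hd0unit
  have hmka : Ideal.Quotient.mk m a = abar := by
    rw [← ha₀]
    exact Ideal.Quotient.eq.mpr hamem
  set u := a + π with hudef
  set ρ := aeval u p with hρdef
  have hπm : π ∈ m := by rw [hmπ]; exact Ideal.mem_span_singleton_self π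
  have hdA : IsUnit (f.derivative.eval a) := by
    by_contra h
    have h1 : f.derivative.eval a ∈ m := (mem_maximalIdeal _).mpr h
    have hdiff : f.derivative.eval a - f.derivative.eval a₀ ∈ m :=
      Ideal.mem_of_dvd _ (sub_dvd_eval_sub a a₀ f.derivative) hamem
    have h2 : f.derivative.eval a₀ ∈ m := by
      have := m.sub_mem h1 hdiff
      simpa using this
    exact ((mem_maximalIdeal _).mp h2) hd0unit
  set w := f.derivative.eval a + π * ((taylor a f).divX.divX.eval π) with hwdef
  have hρπw : ρ = π * w := by
    have h1 : ρ = f.eval (π + a) := by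
      rw [hfeval, hρdef, hudef, add_comm]
    rw [h1, ← taylor_eval a f π, eval_two_term, taylor_coeff_zero, taylor_coeff_one, haroot]
    ring
  have hwu : IsUnit w := by
    by_contra h
    have hwm : w ∈ m := (mem_maximalIdeal _).mpr h
    have h2 : f.derivative.eval a ∈ m := by
      have hmem2 : π * ((taylor a f).divX.divX.eval π) ∈ m :=
        Ideal.mul_mem_right _ _ hπm
      have := m.sub_mem hwm hmem2
      rw [hwdef] at this
      simpa using this
    exact ((mem_maximalIdeal _).mp h2) hdA
  have hρm : Ideal.span {ρ} = m := by
    rw [hmπ]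
    apply le_antisymm
    · rw [Ideal.span_singleton_le_span_singleton]
      exact ⟨w, hρπw⟩
    · rw [Ideal.span_singleton_le_span_singleton]
      exact ⟨↑hwu.unit⁻¹, by rw [hρπw, mul_assoc, IsUnit.mul_val_inv, mul_one]⟩
  have hρpow : ∀ k : ℕ, m ^ k = Ideal.span {ρ ^ k} := fun k => by
    rw [← hρm, Ideal.span_singleton_pow]
  have hρℓ : ρ ^ ℓ = 0 := by
    have h := hρpow ℓ
    rw [hbot] at h
    have : ρ ^ ℓ ∈ Ideal.span {ρ ^ ℓ} := Ideal.mem_span_singleton_self _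
    rw [← h] at this
    simpa using this
  have hρℓ1 : ρ ^ (ℓ - 1) ≠ 0 := by
    intro h
    apply hne
    rw [hρpow, h]
    exact Ideal.span_singleton_eq_bot.mpr rfl
  -- minpoly computation
  have hintu : IsIntegral F u := IsIntegral.of_finite F u
  have haevalpow : aeval u (p ^ ℓ) = 0 := by
    rw [map_pow]
    exact hρℓ
  have hdvdpow : minpoly F u ∣ p ^ ℓ := minpoly.dvd F u haevalpow
  have hprime : Prime p := hirr.prime
  obtain ⟨i, hiℓ, hass⟩ := (dvd_prime_pow hprime ℓ).mp hdvdpow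
  have heq : minpoly F u = p ^ i :=
    Polynomial.eq_of_monic_of_associated (minpoly.monic hintu) (hmonic.pow _) hass
  have hieq : i = ℓ := by
    by_contra hcon
    have hi : i ≤ ℓ - 1 := by omega
    have h1 : ρ ^ i = 0 := by
      have h2 := minpoly.aeval F u
      rw [heq, map_pow] at h2
      exact h2
    apply hρℓ1
    calc ρ ^ (ℓ - 1) = ρ ^ i * ρ ^ (ℓ - 1 - i) := by rw [← pow_add]; congr 1; omega
    _ = 0 := by rw [h1, zero_mul]
  -- adjoin is everything
  set B := Algebra.adjoin F {u} with hBdef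
  have hρB : ρ ∈ B := by
    rw [hBdef, Algebra.adjoin_singleton_eq_range_aeval]
    exact ⟨p, rfl⟩
  have hmku : Ideal.Quotient.mk m u = abar := by
    rw [hudef, map_add, hmka, Ideal.Quotient.eq_zero_iff_mem.mpr hπm, add_zero]
  have hBres : B.map (Ideal.Quotient.mkₐ F m) = ⊤ := by
    rw [hBdef, AlgHom.map_adjoin, Set.image_singleton]
    have h1 : (Ideal.Quotient.mkₐ F m) u = abar := hmku
    rw [h1, ← IntermediateField.adjoin_simple_toSubalgebra_of_isAlgebraic hpint.isAlgebraic, habar,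
      IntermediateField.top_toSubalgebra]
  have hBm : ∀ x : A, ∃ b ∈ B, x - b ∈ m := by
    intro x
    have hx : Ideal.Quotient.mkₐ F m x ∈ B.map (Ideal.Quotient.mkₐ F m) := by
      rw [hBres]; trivial
    obtain ⟨b, hb, hbx⟩ := hx
    refine ⟨b, hb, ?_⟩
    have hbx' : Ideal.Quotient.mk m b = Ideal.Quotient.mk m x := by simpa using hbx
    have h2 := Ideal.Quotient.eq.mp hbx'
    rw [← neg_sub]
    exact m.neg_mem h2
  have hsup : ∀ k : ℕ,
      Subalgebra.toSubmodule B ⊔ Submodule.restrictScalars F (m ^ k : Ideal A) = ⊤ := by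
    intro k
    induction k with
    | zero =>
      rw [pow_zero, Ideal.one_eq_top]
      rw [eq_top_iff]
      intro x _
      exact Submodule.mem_sup_right (by trivial)
    | succ k ih =>
      rw [eq_top_iff]
      intro x _
      have hx : x ∈ Subalgebra.toSubmodule B ⊔ Submodule.restrictScalars F (m ^ k) := by
        rw [ih]; trivial
      obtain ⟨b, hb, y, hy, hxy⟩ := Submodule.mem_sup.mp hx
      have hy' : y ∈ (m ^ k : Ideal A) := hy
      rw [hρpow k] at hy'
      obtain ⟨t, ht⟩ := Ideal.mem_span_singleton'.mp hy'
      obtain ⟨b', hb', hz⟩ := hBm t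
      apply Submodule.mem_sup.mpr
      refine ⟨b + b' * ρ ^ k, ?_, (t - b') * ρ ^ k, ?_, ?_⟩
      · exact Submodule.add_mem _ hb
          (by
            have : b' * ρ ^ k ∈ B := B.mul_mem hb' (B.pow_mem hρB k)
            exact this)
      · show (t - b') * ρ ^ k ∈ (m ^ (k + 1) : Ideal A)
        rw [pow_succ']
        exact Ideal.mul_mem_mul hz
          (by rw [hρpow]; exact Ideal.mem_span_singleton_self _)
      · rw [← hxy, ← ht]; ring
  have hBtop : B = ⊤ := by
    have h := hsup ℓ
    rw [hbot] at h
    have h2 : Submodule.restrictScalars F (⊥ : Ideal A) = (⊥ : Submodule F A) := rfl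
    rw [h2, sup_bot_eq] at h
    exact Algebra.toSubmodule_eq_top.mp h
  exact ⟨u, hBtop, p, hmonic, hirr, by rw [heq, hieq]⟩
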